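/- With the fixed-s orthogonal family setup, for every n ≥ 0 one has ∮_{|z|=1} p_{n+1}(z) · p_n(1/z) · exp(s(z + 1/z)) dz = (1/s)·b_n·h_n + h_{n+1}, where b_n is the coefficient of z^n in p_{n+1}. (Note the integral here is against exp(s(z+1/z)) dz, not dμ = exp(s(z+1/z)) dz/z.) -/

import Mathlib

open Polynomial

namespace Stmt9Aux

open Complex Metric Set

/-- The bilinear pairing `⟨a,b⟩ = ∮ a(z) b(1/z) e^{s(z+1/z)} dz/z`. -/
noncomputable def B (s : ℝ) (a b : Polynomial ℂ) : ℂ :=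
  ∮ z in C(0, 1), a.eval z * b.eval z⁻¹ * Complex.exp (s * (z + z⁻¹)) / z

lemma sphere_ne_zero {z : ℂ} (hz : z ∈ sphere (0:ℂ) 1) : z ≠ 0 := by
  intro h
  rw [mem_sphere_zero_iff_norm, h] at hz
  simp at hz

lemma contOn0 (s : ℝ) (a b : Polynomial ℂ) :
    ContinuousOn (fun z : ℂ => a.eval z * b.eval z⁻¹ * Complex.exp (s * (z + z⁻¹)))
      (sphere (0:ℂ) 1) := by
  have hinv : ContinuousOn (fun z : ℂ => z⁻¹) (sphere (0:ℂ) 1) :=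
    ContinuousOn.inv₀ continuousOn_id (fun z hz => sphere_ne_zero hz)
  refine ContinuousOn.mul (ContinuousOn.mul (a.continuous.continuousOn) ?_) ?_
  · exact b.continuous.comp_continuousOn hinv
  · exact Complex.continuous_exp.comp_continuousOn
      (continuousOn_const.mul (continuousOn_id.add hinv))

lemma contOn (s : ℝ) (a b : Polynomial ℂ) :
    ContinuousOn (fun z : ℂ => a.eval z * b.eval z⁻¹ * Complex.exp (s * (z + z⁻¹)) / z)
      (sphere (0:ℂ) 1) :=
  (contOn0 s a b).div continuousOn_id (fun z hz => sphere_ne_zero hz)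

lemma intB (s : ℝ) (a b : Polynomial ℂ) :
    CircleIntegrable (fun z : ℂ => a.eval z * b.eval z⁻¹ * Complex.exp (s * (z + z⁻¹)) / z)
      0 1 :=
  (contOn s a b).circleIntegrable zero_le_one

lemma intB0 (s : ℝ) (a b : Polynomial ℂ) :
    CircleIntegrable (fun z : ℂ => a.eval z * b.eval z⁻¹ * Complex.exp (s * (z + z⁻¹)))
      0 1 :=
  (contOn0 s a b).circleIntegrable zero_le_one

lemma integral_add' {f g : ℂ → ℂ} (hf : CircleIntegrable f 0 1) (hg : CircleIntegrable g 0 1) :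
    (∮ z in C(0, 1), (f z + g z)) = (∮ z in C(0, 1), f z) + ∮ z in C(0, 1), g z := by
  simp only [circleIntegral, smul_add, intervalIntegral.integral_add hf.out hg.out]

lemma B_add_left (s : ℝ) (a₁ a₂ b : Polynomial ℂ) :
    B s (a₁ + a₂) b = B s a₁ b + B s a₂ b := by
  unfold B
  rw [← integral_add' (intB s a₁ b) (intB s a₂ b)]
  congr 1
  funext z
  simp only [Pi.add_apply, eval_add]
  ring

lemma B_smul_left (s : ℝ) (c : ℂ) (a b : Polynomial ℂ) :
    B s (Polynomial.C c * a) b = c * B s a b := by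
  unfold B
  rw [← circleIntegral.integral_const_mul]
  congr 1
  funext z
  simp only [eval_mul, eval_C]
  ring

lemma B_add_right (s : ℝ) (a b₁ b₂ : Polynomial ℂ) :
    B s a (b₁ + b₂) = B s a b₁ + B s a b₂ := by
  unfold B
  rw [← integral_add' (intB s a b₁) (intB s a b₂)]
  congr 1
  funext z
  simp only [Pi.add_apply, eval_add]
  ring

lemma B_smul_right (s : ℝ) (c : ℂ) (a b : Polynomial ℂ) :
    B s a (Polynomial.C c * b) = c * B s a b := by
  unfold B
  rw [← circleIntegral.integral_const_mul]
  congr 1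
  funext z
  simp only [eval_mul, eval_C]
  ring

lemma B_zero_left (s : ℝ) (b : Polynomial ℂ) : B s 0 b = 0 := by
  unfold B
  have : (fun z : ℂ => (0 : Polynomial ℂ).eval z * b.eval z⁻¹ *
      Complex.exp (s * (z + z⁻¹)) / z) = fun _ => (0 : ℂ) := by
    funext z; simp
  rw [this]
  simp [circleIntegral]

lemma B_zero_right (s : ℝ) (a : Polynomial ℂ) : B s a 0 = 0 := by
  unfold B
  have : (fun z : ℂ => a.eval z * (0 : Polynomial ℂ).eval z⁻¹ *
      Complex.exp (s * (z + z⁻¹)) / z) = fun _ => (0 : ℂ) := by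
    funext z; simp
  rw [this]
  simp [circleIntegral]

section Orth

lemma coeff_self (p : ℕ → Polynomial ℂ) (hmonic : ∀ n, (p n).Monic)
    (hdeg : ∀ n, (p n).natDegree = n) (m : ℕ) : (p m).coeff m = 1 := by
  have := (hmonic m).coeff_natDegree
  rwa [hdeg m] at this

lemma coeff_high (p : ℕ → Polynomial ℂ) (hdeg : ∀ n, (p n).natDegree = n)
    {m k : ℕ} (hk : m < k) : (p m).coeff k = 0 :=
  Polynomial.coeff_eq_zero_of_natDegree_lt (by rw [hdeg m]; exact hk)

lemma p_zero (p : ℕ → Polynomial ℂ) (hmonic : ∀ n, (p n).Monic)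
    (hdeg : ∀ n, (p n).natDegree = n) : p 0 = 1 :=
  ((hmonic 0).natDegree_eq_zero).mp (hdeg 0)

variable (s : ℝ) (p : ℕ → Polynomial ℂ)
  (hmonic : ∀ n, (p n).Monic) (hdeg : ∀ n, (p n).natDegree = n)
  (horth : ∀ n m, n ≠ m → B s (p n) (p m) = 0)

include hmonic hdeg horth

lemma B_low (m : ℕ) : ∀ d, ∀ a : Polynomial ℂ, a.natDegree ≤ d →
    (∀ k, m ≤ k → a.coeff k = 0) → B s a (p m) = 0 := by
  intro d
  induction d with
  | zero =>
    intro a ha hcoeff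
    rcases Nat.eq_zero_or_pos m with hm | hm
    · subst hm
      have : a = 0 := by
        rw [Polynomial.eq_C_of_natDegree_le_zero ha, hcoeff 0 le_rfl]
        simp
      rw [this, B_zero_left]
    · have ha' : a = Polynomial.C (a.coeff 0) * p 0 := by
        rw [p_zero p hmonic hdeg, mul_one]
        exact Polynomial.eq_C_of_natDegree_le_zero ha
      rw [ha', B_smul_left, horth 0 m (by omega), mul_zero]
  | succ d ih =>
    intro a ha hcoeff
    by_cases had : a.natDegree ≤ d
    · exact ih a had hcoeff
    have hadeg : a.natDegree = d + 1 := le_antisymm ha (by omega)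
    have hlead : a.coeff (d + 1) ≠ 0 := by
      rw [← hadeg]
      exact Polynomial.leadingCoeff_ne_zero.mpr (fun h0 => by
        rw [h0] at hadeg; simp only [Polynomial.natDegree_zero] at hadeg; omega)
    have hdm : d + 1 < m := by
      by_contra hc
      exact hlead (hcoeff (d + 1) (by omega))
    set c : ℂ := a.coeff (d + 1) with hc
    set r : Polynomial ℂ := a - Polynomial.C c * p (d + 1) with hr
    have hrcoeff : ∀ k, d + 1 ≤ k → r.coeff k = 0 := by
      intro k hk
      rcases eq_or_lt_of_le hk with hk1 | hk1
      · simp only [hr, Polynomial.coeff_sub, Polynomial.coeff_C_mul, ← hk1,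
          coeff_self p hmonic hdeg (d + 1), mul_one, hc, sub_self]
      · simp only [hr, Polynomial.coeff_sub, Polynomial.coeff_C_mul,
          coeff_high p hdeg hk1,
          Polynomial.coeff_eq_zero_of_natDegree_lt (lt_of_le_of_lt ha hk1), mul_zero, sub_zero]
    have hrd : r.natDegree ≤ d :=
      Polynomial.natDegree_le_iff_coeff_eq_zero.mpr fun N hN => hrcoeff N (by omega)
    have hrm : ∀ k, m ≤ k → r.coeff k = 0 := fun k hk => hrcoeff k (by omega)
    have ha' : a = Polynomial.C c * p (d + 1) + r := by rw [hr]; ring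
    rw [ha', B_add_left, B_smul_left, horth (d + 1) m (by omega), mul_zero, zero_add]
    exact ih r hrd hrm

lemma B_low' (m : ℕ) : ∀ d, ∀ a : Polynomial ℂ, a.natDegree ≤ d →
    (∀ k, m ≤ k → a.coeff k = 0) → B s (p m) a = 0 := by
  intro d
  induction d with
  | zero =>
    intro a ha hcoeff
    rcases Nat.eq_zero_or_pos m with hm | hm
    · subst hm
      have : a = 0 := by
        rw [Polynomial.eq_C_of_natDegree_le_zero ha, hcoeff 0 le_rfl]
        simp
      rw [this, B_zero_right]
    · have ha' : a = Polynomial.C (a.coeff 0) * p 0 := by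
        rw [p_zero p hmonic hdeg, mul_one]
        exact Polynomial.eq_C_of_natDegree_le_zero ha
      rw [ha', B_smul_right, horth m 0 (by omega), mul_zero]
  | succ d ih =>
    intro a ha hcoeff
    by_cases had : a.natDegree ≤ d
    · exact ih a had hcoeff
    have hadeg : a.natDegree = d + 1 := le_antisymm ha (by omega)
    have hlead : a.coeff (d + 1) ≠ 0 := by
      rw [← hadeg]
      exact Polynomial.leadingCoeff_ne_zero.mpr (fun h0 => by
        rw [h0] at hadeg; simp only [Polynomial.natDegree_zero] at hadeg; omega)
    have hdm : d + 1 < m := by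
      by_contra hc
      exact hlead (hcoeff (d + 1) (by omega))
    set c : ℂ := a.coeff (d + 1) with hc
    set r : Polynomial ℂ := a - Polynomial.C c * p (d + 1) with hr
    have hrcoeff : ∀ k, d + 1 ≤ k → r.coeff k = 0 := by
      intro k hk
      rcases eq_or_lt_of_le hk with hk1 | hk1
      · simp only [hr, Polynomial.coeff_sub, Polynomial.coeff_C_mul, ← hk1,
          coeff_self p hmonic hdeg (d + 1), mul_one, hc, sub_self]
      · simp only [hr, Polynomial.coeff_sub, Polynomial.coeff_C_mul,
          coeff_high p hdeg hk1,
          Polynomial.coeff_eq_zero_of_natDegree_lt (lt_of_le_of_lt ha hk1), mul_zero, sub_zero]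
    have hrd : r.natDegree ≤ d :=
      Polynomial.natDegree_le_iff_coeff_eq_zero.mpr fun N hN => hrcoeff N (by omega)
    have hrm : ∀ k, m ≤ k → r.coeff k = 0 := fun k hk => hrcoeff k (by omega)
    have ha' : a = Polynomial.C c * p (d + 1) + r := by rw [hr]; ring
    rw [ha', B_add_right, B_smul_right, horth m (d + 1) (by omega), mul_zero, zero_add]
    exact ih r hrd hrm

lemma B_high (m : ℕ) (a : Polynomial ℂ) (ha : a.natDegree ≤ m) :
    B s a (p m) = a.coeff m * B s (p m) (p m) := by
  set r : Polynomial ℂ := a - Polynomial.C (a.coeff m) * p m with hr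
  have hrcoeff : ∀ k, m ≤ k → r.coeff k = 0 := by
    intro k hk
    rcases eq_or_lt_of_le hk with hk1 | hk1
    · simp only [hr, Polynomial.coeff_sub, Polynomial.coeff_C_mul, ← hk1,
        coeff_self p hmonic hdeg m, mul_one, sub_self]
    · simp only [hr, Polynomial.coeff_sub, Polynomial.coeff_C_mul,
        coeff_high p hdeg hk1,
        Polynomial.coeff_eq_zero_of_natDegree_lt (lt_of_le_of_lt ha hk1), mul_zero, sub_zero]
  have hrd : r.natDegree ≤ m :=
    Polynomial.natDegree_le_iff_coeff_eq_zero.mpr fun N hN => hrcoeff N (by omega)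
  have ha' : a = Polynomial.C (a.coeff m) * p m + r := by rw [hr]; ring
  rw [ha', B_add_left, B_smul_left,
    B_low s p hmonic hdeg horth m m r hrd hrcoeff, add_zero, ← ha']

lemma B_high' (m : ℕ) (a : Polynomial ℂ) (ha : a.natDegree ≤ m) :
    B s (p m) a = a.coeff m * B s (p m) (p m) := by
  set r : Polynomial ℂ := a - Polynomial.C (a.coeff m) * p m with hr
  have hrcoeff : ∀ k, m ≤ k → r.coeff k = 0 := by
    intro k hk
    rcases eq_or_lt_of_le hk with hk1 | hk1
    · simp only [hr, Polynomial.coeff_sub, Polynomial.coeff_C_mul, ← hk1,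
        coeff_self p hmonic hdeg m, mul_one, sub_self]
    · simp only [hr, Polynomial.coeff_sub, Polynomial.coeff_C_mul,
        coeff_high p hdeg hk1,
        Polynomial.coeff_eq_zero_of_natDegree_lt (lt_of_le_of_lt ha hk1), mul_zero, sub_zero]
  have hrd : r.natDegree ≤ m :=
    Polynomial.natDegree_le_iff_coeff_eq_zero.mpr fun N hN => hrcoeff N (by omega)
  have ha' : a = Polynomial.C (a.coeff m) * p m + r := by rw [hr]; ring
  rw [ha', B_add_right, B_smul_right,
    B_low' s p hmonic hdeg horth m m r hrd hrcoeff, add_zero, ← ha']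

end Orth


lemma coeff_X_mul_derivative (q : Polynomial ℂ) (k : ℕ) :
    (X * q.derivative).coeff k = (k : ℂ) * q.coeff k := by
  cases k with
  | zero => simp [Polynomial.mul_coeff_zero]
  | succ m =>
    rw [Polynomial.coeff_X_mul, Polynomial.coeff_derivative]
    push_cast
    ring

end Stmt9Aux

/-- `∮ p_{n+1}(z)·p_n(1/z)·e^{s(z+1/z)} dz = (1/s)·b_n·h_n + h_{n+1}` for `n ≥ 0`,
where `b_n` is the coefficient of `z^n` in `p_{n+1}`. -/
theorem stmt_9 (s : ℝ) (hs : 0 < s)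
    (p : ℕ → Polynomial ℂ)
    (hmonic : ∀ n, (p n).Monic)
    (hdeg : ∀ n, (p n).natDegree = n)
    (hreal : ∀ n k, ((p n).coeff k).im = 0)
    (hp0 : ∀ n, (p n).coeff 0 ≠ 0)
    (horth : ∀ n m, n ≠ m →
      (∮ z in C(0, 1), (p n).eval z * (p m).eval z⁻¹ *
        Complex.exp (s * (z + z⁻¹)) / z) = 0)
    (h : ℕ → ℂ)
    (hh : ∀ n, h n = ∮ z in C(0, 1), (p n).eval z * (p n).eval z⁻¹ *
        Complex.exp (s * (z + z⁻¹)) / z)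
    (hne : ∀ n, h n ≠ 0)
    (n : ℕ) :
    (∮ z in C(0, 1), (p (n + 1)).eval z * (p n).eval z⁻¹ *
        Complex.exp (s * (z + z⁻¹))) =
      (1 / (s : ℂ)) * (p (n + 1)).coeff n * h n + h (n + 1) := by
  classical
  have hsC : (s : ℂ) ≠ 0 := Complex.ofReal_ne_zero.mpr (ne_of_gt hs)
  have horthB : ∀ a c : ℕ, a ≠ c → Stmt9Aux.B s (p a) (p c) = 0 := fun a c hac => horth a c hac
  have hhB : ∀ m, Stmt9Aux.B s (p m) (p m) = h m := fun m => (hh m).symm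
  set b : ℂ := (p (n + 1)).coeff n with hbdef
  -- derivative of F(z) = p_{n+1}(z) p_n(1/z) e^{s(z+1/z)} integrates to zero
  have hDzero : (∮ z in C(0, 1),
      (((p (n+1)).derivative.eval z * (p n).eval z⁻¹ +
          (p (n+1)).eval z * ((p n).derivative.eval z⁻¹ * (-(z ^ 2)⁻¹))) *
          Complex.exp (↑s * (z + z⁻¹)) +
        (p (n+1)).eval z * (p n).eval z⁻¹ *
          (Complex.exp (↑s * (z + z⁻¹)) * (↑s * (1 + -(z ^ 2)⁻¹))))) = 0 := by
    apply circleIntegral.integral_eq_zero_of_hasDerivWithinAt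
      (f := fun z : ℂ => (p (n+1)).eval z * (p n).eval z⁻¹ * Complex.exp (↑s * (z + z⁻¹)))
      zero_le_one
    intro z hz
    have hz0 : z ≠ 0 := Stmt9Aux.sphere_ne_zero hz
    have h1 : HasDerivAt (fun z : ℂ => (p n).eval z⁻¹)
        ((p n).derivative.eval z⁻¹ * (-(z ^ 2)⁻¹)) z :=
      HasDerivAt.comp z ((p n).hasDerivAt z⁻¹) (hasDerivAt_inv hz0)
    have h2 : HasDerivAt (fun z : ℂ => Complex.exp (↑s * (z + z⁻¹)))
        (Complex.exp (↑s * (z + z⁻¹)) * (↑s * (1 + -(z ^ 2)⁻¹))) z :=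
      HasDerivAt.cexp (HasDerivAt.const_mul _ ((hasDerivAt_id z).add (hasDerivAt_inv hz0)))
    exact ((((p (n+1)).hasDerivAt z).mul h1).mul h2).hasDerivWithinAt
  -- split the derivative integral into the four B-type integrals
  have hA : CircleIntegrable (fun z : ℂ =>
      (X * (p (n+1)).derivative).eval z * (p n).eval z⁻¹ * Complex.exp (↑s * (z + z⁻¹)) / z -
      (p (n+1)).eval z * (X * (p n).derivative).eval z⁻¹ * Complex.exp (↑s * (z + z⁻¹)) / z) 0 1 :=
    ((Stmt9Aux.contOn s (X * (p (n+1)).derivative) (p n)).sub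
      (Stmt9Aux.contOn s (p (n+1)) (X * (p n).derivative))).circleIntegrable zero_le_one
  have hB : CircleIntegrable (fun z : ℂ =>
      (s : ℂ) * ((p (n+1)).eval z * (p n).eval z⁻¹ * Complex.exp (↑s * (z + z⁻¹))) -
      (s : ℂ) * ((p (n+1)).eval z * (X * p n).eval z⁻¹ * Complex.exp (↑s * (z + z⁻¹)) / z)) 0 1 :=
    ((continuousOn_const.mul (Stmt9Aux.contOn0 s (p (n+1)) (p n))).sub
      (continuousOn_const.mul (Stmt9Aux.contOn s (p (n+1)) (X * p n)))).circleIntegrable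
      zero_le_one
  have key : Stmt9Aux.B s (X * (p (n+1)).derivative) (p n)
      - Stmt9Aux.B s (p (n+1)) (X * (p n).derivative)
      + ((s : ℂ) * (∮ z in C(0, 1), (p (n + 1)).eval z * (p n).eval z⁻¹ *
            Complex.exp (↑s * (z + z⁻¹)))
        - (s : ℂ) * Stmt9Aux.B s (p (n+1)) (X * p n)) = 0 := by
    unfold Stmt9Aux.B
    rw [← circleIntegral.integral_const_mul, ← circleIntegral.integral_const_mul,
      ← circleIntegral.integral_sub (Stmt9Aux.intB s (X * (p (n+1)).derivative) (p n))
        (Stmt9Aux.intB s (p (n+1)) (X * (p n).derivative)),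
      ← circleIntegral.integral_sub
        ((continuousOn_const.fun_mul (Stmt9Aux.contOn0 s (p (n+1)) (p n))).circleIntegrable
          zero_le_one)
        ((continuousOn_const.fun_mul (Stmt9Aux.contOn s (p (n+1)) (X * p n))).circleIntegrable
          zero_le_one),
      ← Stmt9Aux.integral_add' hA hB]
    refine Eq.trans (circleIntegral.integral_congr zero_le_one ?_) hDzero
    intro z hz
    have hz0 : z ≠ 0 := Stmt9Aux.sphere_ne_zero hz
    have hzi : z⁻¹ ≠ 0 := inv_ne_zero hz0
    simp only [Polynomial.eval_mul, Polynomial.eval_X]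
    field_simp
    ring
  -- evaluate the three pairings
  have hQcn : (p n).coeff n = 1 := Stmt9Aux.coeff_self p hmonic hdeg n
  have hPc : (p (n+1)).coeff (n+1) = 1 := Stmt9Aux.coeff_self p hmonic hdeg (n+1)
  -- first pairing
  have hA1 : Stmt9Aux.B s (X * (p (n+1)).derivative) (p n) = -b * h n := by
    set r : Polynomial ℂ := X * (p (n+1)).derivative - Polynomial.C ((n : ℂ) + 1) * p (n+1)
      + Polynomial.C b * p n with hrdef
    have hrc : ∀ k, n ≤ k → r.coeff k = 0 := by
      intro k hk
      have hco : r.coeff k = (k : ℂ) * (p (n+1)).coeff k - ((n : ℂ) + 1) * (p (n+1)).coeff k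
          + b * (p n).coeff k := by
        simp only [hrdef, Polynomial.coeff_add, Polynomial.coeff_sub, Polynomial.coeff_C_mul,
          Stmt9Aux.coeff_X_mul_derivative]
      rcases show k = n ∨ k = n + 1 ∨ n + 2 ≤ k by omega with rfl | rfl | hk2
      · rw [hco, hQcn, ← hbdef]
        ring
      · rw [hco, hPc, Stmt9Aux.coeff_high p hdeg (show n < n + 1 by omega)]
        push_cast
        ring
      · rw [hco, Stmt9Aux.coeff_high p hdeg (show n + 1 < k by omega),
          Stmt9Aux.coeff_high p hdeg (show n < k by omega)]
        ring
    have hrn : r.natDegree ≤ n :=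
      Polynomial.natDegree_le_iff_coeff_eq_zero.mpr fun N hN => hrc N (by omega)
    have hXP' : X * (p (n+1)).derivative
        = Polynomial.C ((n : ℂ) + 1) * p (n+1) + (Polynomial.C (-b) * p n + r) := by
      rw [hrdef, map_neg]
      ring
    rw [hXP', Stmt9Aux.B_add_left, Stmt9Aux.B_add_left, Stmt9Aux.B_smul_left,
      Stmt9Aux.B_smul_left, horthB (n+1) n (by omega), hhB n,
      Stmt9Aux.B_low s p hmonic hdeg horthB n n r hrn hrc]
    ring
  -- second pairing
  have hA2 : Stmt9Aux.B s (p (n+1)) (X * (p n).derivative) = 0 := by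
    have hc : ∀ k, n + 1 ≤ k → (X * (p n).derivative).coeff k = 0 := by
      intro k hk
      rw [Stmt9Aux.coeff_X_mul_derivative, Stmt9Aux.coeff_high p hdeg (show n < k by omega),
        mul_zero]
    exact Stmt9Aux.B_low' s p hmonic hdeg horthB (n+1) (n+1) _
      (Polynomial.natDegree_le_iff_coeff_eq_zero.mpr fun N hN => hc N (by omega)) hc
  -- third pairing
  have hA4 : Stmt9Aux.B s (p (n+1)) (X * p n) = h (n + 1) := by
    have hdg : (X * p n).natDegree ≤ n + 1 := by
      refine Polynomial.natDegree_le_iff_coeff_eq_zero.mpr fun N hN => ?_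
      obtain ⟨m, rfl⟩ := Nat.exists_eq_succ_of_ne_zero (show N ≠ 0 by omega)
      rw [Polynomial.coeff_X_mul]
      exact Stmt9Aux.coeff_high p hdeg (by omega)
    rw [Stmt9Aux.B_high' s p hmonic hdeg horthB (n+1) _ hdg, Polynomial.coeff_X_mul, hQcn,
      hhB (n+1), one_mul]
  rw [hA1, hA2, hA4] at key
  set T : ℂ := ∮ (z : ℂ) in C(0, 1), (p (n + 1)).eval z * (p n).eval z⁻¹ *
    Complex.exp (↑s * (z + z⁻¹)) with hTdef
  field_simp
  linear_combination key
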